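/- Let Λ ⊆ ℂ be a lattice and let ω, ω' ∈ ℂ be nonzero with ω·Λ ⊆ Λ and ω'·Λ ⊆ Λ. Suppose k is a positive integer with ω^k = ω'^k. Then for every n ≥ 0, both ([ω] × [ω'])^{n+k}(Δ) = ([ω] × [ω'])^{n}(Δ) and (φ_ω × φ_{ω'})^{n+k}(Δ') = (φ_ω × φ_{ω'})^{n}(Δ'); that is, Δ and Δ' are pre-periodic with the same pair (n,k). -/

import Mathlib

open Complex

noncomputable section

/-- The analytic model `E = ℂ/Λ` of an elliptic curve with period lattice `Λ`. -/
abbrev EC (Λ : AddSubgroup ℂ) : Type := ℂ ⧸ Λ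

/-- The endomorphism `[ω] : E → E` induced by multiplication by `ω` on `ℂ`,
for `ω` with `ω·Λ ⊆ Λ`. -/
def mulE (Λ : AddSubgroup ℂ) (ω : ℂ) (hω : ∀ x ∈ Λ, ω * x ∈ Λ) : EC Λ →+ EC Λ :=
  QuotientAddGroup.map Λ Λ (AddMonoidHom.mulLeft ω) (fun x hx => hω x hx)

/-- The relation identifying a point of `E` with its negative. -/
def negRel (Λ : AddSubgroup ℂ) (x y : EC Λ) : Prop := x = y ∨ x = -y

/-- The quotient `E/±` of `E` by the involution `z ↦ -z`. -/
abbrev ECpm (Λ : AddSubgroup ℂ) : Type := Quot (negRel Λ)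

/-- The quotient map `q : E → E/±`. -/
def qpm (Λ : AddSubgroup ℂ) : EC Λ → ECpm Λ := Quot.mk _

/-- The Lattès-type map `φ_ω : E/± → E/±` induced by `[ω]`. -/
def lattes (Λ : AddSubgroup ℂ) (ω : ℂ) (hω : ∀ x ∈ Λ, ω * x ∈ Λ) :
    ECpm Λ → ECpm Λ :=
  Quot.map (mulE Λ ω hω) (by
    intro x y h
    rcases h with h | h
    · exact Or.inl (by rw [h])
    · exact Or.inr (by rw [h, map_neg]))

lemma mulE_iter_mk (Λ : AddSubgroup ℂ) (ω : ℂ) (hω : ∀ x ∈ Λ, ω * x ∈ Λ)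
    (m : ℕ) (w : ℂ) :
    (⇑(mulE Λ ω hω))^[m] (QuotientAddGroup.mk w) = QuotientAddGroup.mk (ω ^ m * w) := by
  induction m with
  | zero => simp
  | succ m ih =>
    rw [Function.iterate_succ_apply', ih]
    show QuotientAddGroup.map _ _ _ _ _ = _
    erw [QuotientAddGroup.map_mk]
    congr 1
    simp only [AddMonoidHom.coe_mulLeft]
    ring

lemma lattes_iter_mk (Λ : AddSubgroup ℂ) (ω : ℂ) (hω : ∀ x ∈ Λ, ω * x ∈ Λ)
    (m : ℕ) (x : EC Λ) :
    (lattes Λ ω hω)^[m] (Quot.mk _ x) = Quot.mk _ ((⇑(mulE Λ ω hω))^[m] x) := by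
  induction m with
  | zero => rfl
  | succ m ih =>
    rw [Function.iterate_succ_apply', ih, Function.iterate_succ_apply']
    rfl

/-- If `ω^k = ω'^k` with `k > 0`, then for every `n` both the diagonal `Δ` is pre-periodic for
`[ω] × [ω']` with pair `(n, k)` and the diagonal `Δ'` is pre-periodic for `φ_ω × φ_ω'` with
the same pair `(n, k)`. -/
theorem both_diagonals_preperiodic_of_pow_eq_pow
    (ω₁ ω₂ : ℂ) (hind : LinearIndependent ℝ ![ω₁, ω₂])
    (Λ : AddSubgroup ℂ) (hΛ : Λ = AddSubgroup.closure {ω₁, ω₂})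
    (ω ω' : ℂ) (hω0 : ω ≠ 0) (hω'0 : ω' ≠ 0)
    (hω : ∀ x ∈ Λ, ω * x ∈ Λ) (hω' : ∀ x ∈ Λ, ω' * x ∈ Λ)
    (k : ℕ) (hk : 0 < k) (hpow : ω ^ k = ω' ^ k) (n : ℕ) :
    (Prod.map ⇑(mulE Λ ω hω) ⇑(mulE Λ ω' hω'))^[n + k] '' Set.diagonal (EC Λ) =
      (Prod.map ⇑(mulE Λ ω hω) ⇑(mulE Λ ω' hω'))^[n] '' Set.diagonal (EC Λ) ∧
    (Prod.map (lattes Λ ω hω) (lattes Λ ω' hω'))^[n + k] '' Set.diagonal (ECpm Λ) =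
      (Prod.map (lattes Λ ω hω) (lattes Λ ω' hω'))^[n] '' Set.diagonal (ECpm Λ) := by
  have hc : ω ^ k ≠ 0 := pow_ne_zero _ hω0
  have step : ∀ {X : Type} (f : X → X) (S : Set X), f^[k] '' S = S →
      f^[n + k] '' S = f^[n] '' S := by
    intro X f S h
    rw [Function.iterate_add, Set.image_comp, h]
  constructor
  · refine step _ _ ?_
    ext ⟨a, b⟩
    constructor
    · rintro ⟨⟨x, y⟩, hxy, heq⟩
      obtain rfl : x = y := hxy
      obtain ⟨w, rfl⟩ := QuotientAddGroup.mk_surjective x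
      simp only [Prod.map_iterate, Prod.map_apply, mulE_iter_mk] at heq
      rw [Prod.mk.injEq] at heq
      obtain ⟨rfl, rfl⟩ := heq
      show QuotientAddGroup.mk _ = QuotientAddGroup.mk _
      rw [hpow]
    · intro hab
      obtain rfl : a = b := hab
      obtain ⟨w, rfl⟩ := QuotientAddGroup.mk_surjective a
      refine ⟨(QuotientAddGroup.mk (w / ω ^ k), QuotientAddGroup.mk (w / ω ^ k)), rfl, ?_⟩
      simp only [Prod.map_iterate, Prod.map_apply, mulE_iter_mk]
      rw [← hpow, mul_div_cancel₀ _ hc]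
  · refine step _ _ ?_
    ext ⟨a, b⟩
    constructor
    · rintro ⟨⟨x, y⟩, hxy, heq⟩
      obtain rfl : x = y := hxy
      obtain ⟨z, rfl⟩ := Quot.exists_rep x
      obtain ⟨w, rfl⟩ := QuotientAddGroup.mk_surjective z
      simp only [Prod.map_iterate, Prod.map_apply, lattes_iter_mk, mulE_iter_mk] at heq
      rw [Prod.mk.injEq] at heq
      obtain ⟨rfl, rfl⟩ := heq
      show Quot.mk _ (QuotientAddGroup.mk _) = Quot.mk _ (QuotientAddGroup.mk _)
      rw [hpow]
    · intro hab
      obtain rfl : a = b := hab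
      obtain ⟨z, rfl⟩ := Quot.exists_rep a
      obtain ⟨w, rfl⟩ := QuotientAddGroup.mk_surjective z
      refine ⟨(Quot.mk _ (QuotientAddGroup.mk (w / ω ^ k)),
        Quot.mk _ (QuotientAddGroup.mk (w / ω ^ k))), rfl, ?_⟩
      simp only [Prod.map_iterate, Prod.map_apply, lattes_iter_mk, mulE_iter_mk]
      rw [← hpow, mul_div_cancel₀ _ hc]
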